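/- The Jacobi triple product identity: for |q|<1 and x≠0, the sum over all integers n of q^{n^2} x^n equals the infinite product over n≥1 of (1+xq^{2n-1})(1+x^{-1}q^{2n-1})(1-q^{2n}). -/

import Mathlib

open Finset Filter Topology

namespace JTP


noncomputable def P (q : ℂ) (m : ℕ) : ℂ := ∏ j ∈ range m, (1 - q ^ (2*j+2))

lemma one_sub_pow_ne {q : ℂ} (hq : ‖q‖ < 1) {e : ℕ} (he : e ≠ 0) : (1 : ℂ) - q ^ e ≠ 0 := by
  intro h
  have h1 : (1:ℂ) = q ^ e := by linear_combination h
  have : ‖q ^ e‖ < 1 := by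
    rw [norm_pow]
    exact pow_lt_one₀ (norm_nonneg q) hq he
  rw [← h1] at this
  simp at this

lemma P_ne {q : ℂ} (hq : ‖q‖ < 1) (m : ℕ) : P q m ≠ 0 := by
  rw [P, Finset.prod_ne_zero_iff]
  exact fun j _ => one_sub_pow_ne hq (by omega)

lemma P_succ (q : ℂ) (m : ℕ) : P q (m+1) = P q m * (1 - q ^ (2*m+2)) := by
  rw [P, P, Finset.prod_range_succ]

noncomputable def g (q : ℂ) (m k : ℕ) : ℂ := P q m / (P q k * P q (m - k))

lemma g_zero {q : ℂ} (hq : ‖q‖ < 1) (m : ℕ) : g q m 0 = 1 := by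
  rw [g]
  simp only [Nat.sub_zero, P, range_zero, prod_empty, one_mul]
  exact div_self (P_ne hq m)

lemma g_self {q : ℂ} (hq : ‖q‖ < 1) (m : ℕ) : g q m m = 1 := by
  rw [g]
  simp only [Nat.sub_self, P, range_zero, prod_empty, mul_one]
  exact div_self (P_ne hq m)

lemma pascal {q : ℂ} (hq : ‖q‖ < 1) {m k : ℕ} (hk : k < m) :
    g q (m+1) (k+1) = g q m (k+1) + q^(2*(m-k)) * g q m k := by
  obtain ⟨d, rfl⟩ : ∃ d, m = k + d + 1 := ⟨m - k - 1, by omega⟩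
  have h1 : k + d + 1 + 1 - (k + 1) = d + 1 := by omega
  have h2 : k + d + 1 - (k + 1) = d := by omega
  have h3 : k + d + 1 - k = d + 1 := by omega
  rw [g, g, g, h1, h2, h3, P_succ q (k+d+1), P_succ q k, P_succ q d]
  have e1 := P_ne hq (k + d + 1)
  have e2 := P_ne hq k
  have e3 := P_ne hq d
  have e4 := one_sub_pow_ne hq (e := 2*k+2) (by omega)
  have e5 := one_sub_pow_ne hq (e := 2*d+2) (by omega)
  have hexp : 2*(k+d+1)+2 = (2*(d+1)) + (2*k+2) := by ring
  rw [hexp]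
  field_simp
  ring


lemma exp_aux {m k : ℕ} (hk : k ≤ m) : 2*(m-k) + (k+1)*k = k*(k-1) + 2*m := by
  cases k with
  | zero => omega
  | succ n =>
    have h1 : (n+1+1)*(n+1) = (n+1)*n + 2*(n+1) := by ring
    have h2 : (n+1)*(n+1-1) = (n+1)*n := by simp
    omega

lemma gauss {q : ℂ} (hq : ‖q‖ < 1) (t : ℂ) (m : ℕ) :
    ∏ i ∈ range m, (1 + t * q^(2*i)) =
      ∑ k ∈ range (m+1), g q m k * q^(k*(k-1)) * t^k := by
  induction m with
  | zero => simp [g_zero hq]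
  | succ m ih =>
    set A : ℕ → ℂ := fun k => g q m k * q^(k*(k-1)) * t^k with hA
    set C : ℕ → ℂ := fun k => g q (m+1) k * q^(k*(k-1)) * t^k with hC
    set B : ℕ → ℂ := fun k => A k * (t * q^(2*m)) with hB
    have key : ∀ k ∈ range m, C (k+1) = A (k+1) + B k := by
      intro k hk
      rw [Finset.mem_range] at hk
      have hexp : q ^ (2*(m-k)) * q^((k+1)*k) = q^(k*(k-1)) * q^(2*m) := by
        rw [← pow_add, ← pow_add, exp_aux hk.le]
      simp only [hA, hB, hC]
      rw [pascal hq hk]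
      have hs : (k+1) * (k+1-1) = (k+1)*k := by simp
      rw [hs]
      linear_combination (g q m k * t^(k+1)) * hexp
    have top : C (m+1) = B m := by
      simp only [hA, hB, hC]
      rw [g_self hq, g_self hq]
      have hs : (m+1) * (m+1-1) = (m+1)*m := by simp
      have hexp : q ^ ((m+1)*m) = q^(m*(m-1)) * q^(2*m) := by
        rw [← pow_add]
        congr 1
        have := exp_aux (le_refl m)
        omega
      rw [hs, hexp]
      ring
    rw [Finset.prod_range_succ, ih, mul_add, mul_one]
    show (∑ k ∈ range (m+1), A k) + (∑ k ∈ range (m+1), A k) * (t * q^(2*m))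
        = ∑ k ∈ range (m+1+1), C k
    rw [Finset.sum_mul]
    have hBsum : ∀ k ∈ range (m+1), A k * (t * q^(2*m)) = B k := fun k _ => rfl
    rw [Finset.sum_congr rfl hBsum]
    rw [Finset.sum_range_succ (f := C) (n := m+1), Finset.sum_range_succ (f := B) (n := m)]
    rw [Finset.sum_range_succ' (f := C) m, Finset.sum_range_succ' (f := A) m]
    rw [Finset.sum_congr rfl key, Finset.sum_add_distrib]
    have h0 : C 0 = A 0 := by
      simp only [hA, hC]
      rw [g_zero hq, g_zero hq]
    rw [top, h0]
    ring

lemma prod_zpow (a : ℂ) (ha : a ≠ 0) (s : Finset ℕ) (f : ℕ → ℤ) :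
    ∏ i ∈ s, a ^ f i = a ^ (∑ i ∈ s, f i) := by
  classical
  induction s using Finset.cons_induction with
  | empty => simp
  | cons i s hi ih => rw [Finset.prod_cons, Finset.sum_cons, zpow_add₀ ha, ih]

lemma sum_odd_int (N : ℕ) : ∑ i ∈ range N, (2*(i:ℤ)+1) = (N:ℤ)^2 := by
  induction N with
  | zero => simp
  | succ n ih => rw [Finset.sum_range_succ, ih]; push_cast; ring

lemma finiteJTP {q x : ℂ} (hq : ‖q‖ < 1) (hq0 : q ≠ 0) (hx : x ≠ 0) (N : ℕ) :
    ∏ j ∈ range N, ((1 + x * q^(2*j+1)) * (1 + x⁻¹ * q^(2*j+1)))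
      = ∑ k ∈ range (2*N+1), g q (2*N) k * q^(((k:ℤ) - N)^2) * x^((k:ℤ) - N) := by
  have hg := gauss hq (x * q^((1:ℤ) - 2*N)) (2*N)
  -- rewrite the factors of the LHS of hg
  have hti : ∀ i : ℕ, x * q^((1:ℤ) - 2*N) * q^(2*i) = x * q^((2*(i:ℤ)+1-2*N : ℤ)) := by
    intro i
    rw [mul_assoc, ← zpow_natCast q (2*i), ← zpow_add₀ hq0]
    congr 1
    push_cast
    ring_nf
  -- split the product
  have hsplit : ∏ i ∈ range (2*N), (1 + x * q^((2*(i:ℤ)+1-2*N : ℤ)))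
      = (x^N * q^(-((N:ℤ)^2))) *
        ∏ j ∈ range N, ((1 + x * q^(2*j+1)) * (1 + x⁻¹ * q^(2*j+1))) := by
    have h2N : 2*N = N + N := by ring
    rw [h2N, Finset.prod_range_add]
    have hsecond : ∀ i ∈ range N, (1 + x * q^((2*((N+i:ℕ):ℤ)+1-2*N : ℤ)))
        = 1 + x * q^(2*i+1) := by
      intro i _
      congr 1
      rw [← zpow_natCast q (2*i+1)]
      congr 1
      push_cast
      ring_nf
    rw [Finset.prod_congr rfl hsecond]
    have hfirst : ∀ i ∈ range N, (1 + x * q^((2*(i:ℤ)+1-2*N : ℤ)))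
        = (x * q^((2*(i:ℤ)+1-2*N : ℤ))) * (1 + x⁻¹ * q^((2*N-2*(i:ℤ)-1 : ℤ))) := by
      intro i _
      have h0 : q^((2*(i:ℤ)+1-2*N : ℤ)) * q^((2*N-2*(i:ℤ)-1 : ℤ)) = 1 := by
        rw [← zpow_add₀ hq0]
        have : (2*(i:ℤ)+1-2*N) + (2*(N:ℤ)-2*i-1) = 0 := by ring
        rw [this, zpow_zero]
      have hxx : x * x⁻¹ = 1 := mul_inv_cancel₀ hx
      linear_combination (-(x*x⁻¹)) * h0 - hxx
    rw [Finset.prod_congr rfl hfirst, Finset.prod_mul_distrib, Finset.prod_mul_distrib,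
      Finset.prod_const, prod_zpow q hq0]
    have hrefl : ∏ i ∈ range N, (1 + x⁻¹ * q^((2*N-2*(i:ℤ)-1 : ℤ)))
        = ∏ j ∈ range N, (1 + x⁻¹ * q^(2*j+1)) := by
      rw [← Finset.prod_range_reflect (fun j => 1 + x⁻¹ * q^(2*j+1)) N]
      apply Finset.prod_congr rfl
      intro i hi
      rw [Finset.mem_range] at hi
      congr 1
      rw [← zpow_natCast q (2*(N-1-i)+1)]
      congr 1
      push_cast [Nat.cast_sub (show i ≤ N - 1 by omega), Nat.cast_sub (show 1 ≤ N by omega)]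
      ring_nf
    rw [hrefl]
    have hsum : ∑ i ∈ range N, (2*(i:ℤ)+1-2*N : ℤ) = -((N:ℤ)^2) := by
      rw [Finset.sum_sub_distrib, sum_odd_int]
      simp
      ring
    rw [hsum, Finset.prod_mul_distrib, Finset.card_range]
    ring
  rw [Finset.prod_congr rfl (fun i _ => by rw [hti i])] at hg
  rw [hsplit] at hg
  -- now solve for the pair product
  have hxN : (x:ℂ)^N ≠ 0 := pow_ne_zero _ hx
  have hqN : q^(-((N:ℤ)^2)) ≠ 0 := zpow_ne_zero _ hq0
  have hc : (x^N * q^(-((N:ℤ)^2))) ≠ 0 := mul_ne_zero hxN hqN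
  rw [← eq_inv_mul_iff_mul_eq₀ hc] at hg
  rw [hg, Finset.mul_sum]
  apply Finset.sum_congr rfl
  intro k hk
  have hkk : ((k*(k-1):ℕ):ℤ) = (k:ℤ)*((k:ℤ)-1) := by
    cases k with
    | zero => simp
    | succ n => push_cast; ring
  rw [mul_pow, ← zpow_natCast q (k*(k-1)), hkk,
    ← zpow_natCast (q ^ ((1:ℤ) - 2*N)) k, ← zpow_mul,
    ← zpow_natCast x k, ← zpow_natCast x N]
  rw [mul_inv, ← zpow_neg, ← zpow_neg]
  have hxpart : x ^ (-(N:ℤ)) * x^(k:ℤ) = x ^ ((k:ℤ) - N) := by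
    rw [← zpow_add₀ hx]; ring_nf
  have hqpart : q ^ (-(-((N:ℤ)^2))) * (q ^ ((k:ℤ)*((k:ℤ)-1)) * q ^ (((1:ℤ)-2*N) * k)) =
      q ^ (((k:ℤ) - N)^2) := by
    rw [← zpow_add₀ hq0, ← zpow_add₀ hq0]
    congr 1
    ring
  calc (x ^ (-(N:ℤ)) * q ^ (-(-((N:ℤ)^2)))) *
        (g q (2*N) k * q ^ ((k:ℤ)*((k:ℤ)-1)) * (x^(k:ℤ) * q ^ (((1:ℤ)-2*N) * k)))
      = g q (2*N) k * (q ^ (-(-((N:ℤ)^2))) * (q ^ ((k:ℤ)*((k:ℤ)-1)) * q ^ (((1:ℤ)-2*N) * k)))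
        * (x ^ (-(N:ℤ)) * x^(k:ℤ)) := by ring
    _ = _ := by rw [hxpart, hqpart]

/-- Summability of `r^(n^2) * c^n`. -/
lemma summable_aux {r c : ℝ} (hr0 : 0 < r) (hr : r < 1) (hc : 0 < c) :
    Summable (fun n : ℕ => r^(n^2) * c^n) := by
  have hpos : ∀ n : ℕ, 0 < r^(n^2) * c^n := fun n =>
    mul_pos (pow_pos hr0 _) (pow_pos hc _)
  apply summable_of_ratio_test_tendsto_lt_one (l := 0) zero_lt_one
    (Eventually.of_forall fun n => (hpos n).ne')
  have hratio : ∀ n : ℕ, ‖r^((n+1)^2) * c^(n+1)‖ / ‖r^(n^2) * c^n‖ = r^(2*n+1) * c := by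
    intro n
    rw [Real.norm_of_nonneg (hpos _).le, Real.norm_of_nonneg (hpos _).le]
    have h1 : (n+1)^2 = n^2 + (2*n+1) := by ring
    rw [h1, pow_add, pow_succ]
    field_simp
    ring
  simp_rw [hratio]
  have h2 : Tendsto (fun n : ℕ => r^(2*n+1)) atTop (𝓝 0) := by
    apply (tendsto_pow_atTop_nhds_zero_of_lt_one hr0.le hr).comp
    exact tendsto_atTop_atTop_of_monotone (fun a b h => by omega) (fun b => ⟨b, by omega⟩)
  simpa using h2.mul_const c

lemma summable_norm_theta {q x : ℂ} (hq : ‖q‖ < 1) (hq0 : q ≠ 0) (hx : x ≠ 0) :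
    Summable (fun n : ℤ => ‖q^(n^2) * x^n‖) := by
  have hqpos : 0 < ‖q‖ := norm_pos_iff.2 hq0
  have e1 : ∀ n : ℕ, ((n:ℤ))^2 = ((n^2 : ℕ) : ℤ) := by intro n; push_cast; ring
  have key : ∀ (n : ℕ), ‖q^(((n:ℤ))^2) * x^((n:ℤ))‖ = ‖q‖^(n^2) * ‖x‖^n := by
    intro n
    rw [norm_mul, e1, zpow_natCast, zpow_natCast, norm_pow, norm_pow]
  apply Summable.of_nat_of_neg
  · refine Summable.congr (summable_aux hqpos hq (norm_pos_iff.2 hx)) fun n => ?_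
    exact (key n).symm
  · refine Summable.congr (summable_aux hqpos hq
      (inv_pos.2 (norm_pos_iff.2 hx))) fun n => ?_
    have e2 : ((-(n:ℤ)))^2 = ((n^2 : ℕ) : ℤ) := by push_cast; ring
    rw [norm_mul, e2, zpow_natCast, norm_pow, zpow_neg, norm_inv, zpow_natCast,
      norm_pow, inv_pow]

/-- If `u` is summable then `log (1 + u n)` is summable. -/
lemma summable_log {u : ℕ → ℂ} (hu : Summable u) :
    Summable fun n => Complex.log (1 + u n) := by
  apply Summable.of_norm_bounded_eventually (g := fun n => (3/2) * ‖u n‖)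
    (hu.norm.mul_left (3/2))
  rw [Nat.cofinite_eq_atTop]
  have h0 : Tendsto (fun n => ‖u n‖) atTop (𝓝 0) := by
    simpa using hu.tendsto_atTop_zero.norm
  filter_upwards [h0.eventually_le_const (by norm_num : (0:ℝ) < 1/2)] with n hn
  exact Complex.norm_log_one_add_half_le_self hn

lemma hasProd_one_add {u : ℕ → ℂ} (hu : Summable u) (h0 : ∀ n, 1 + u n ≠ 0) :
    HasProd (fun n => 1 + u n) (∏' n, (1 + u n)) :=
  (Complex.multipliable_of_summable_log (f := fun n => 1 + u n) (summable_log hu)).hasProd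

lemma tprod_one_add_ne_zero {u : ℕ → ℂ} (hu : Summable u) (h0 : ∀ n, 1 + u n ≠ 0) :
    (∏' n, (1 + u n)) ≠ 0 := by
  have : Complex.exp (∑' n, Complex.log (1 + u n)) = ∏' n, (1 + u n) :=
    Complex.cexp_tsum_eq_tprod (f := fun n => 1 + u n) h0 (summable_log hu)
  rw [← this]
  exact Complex.exp_ne_zero _

lemma weier (s : Finset ℕ) (a : ℕ → ℝ) (h0 : ∀ i, 0 ≤ a i) (h1 : ∀ i, a i ≤ 1) :
    1 - ∑ i ∈ s, a i ≤ ∏ i ∈ s, (1 - a i) := by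
  classical
  induction s using Finset.cons_induction with
  | empty => simp
  | cons i s hi ih =>
    rw [Finset.prod_cons, Finset.sum_cons]
    have hs0 : 0 ≤ ∑ j ∈ s, a j := Finset.sum_nonneg fun j _ => h0 j
    nlinarith [h0 i, h1 i, ih]


end JTP

open JTP Finset Filter Topology

/-- Jacobi triple product identity: for `‖q‖ < 1` and `x ≠ 0`,
`∑_{n ∈ ℤ} q^(n²) xⁿ = ∏_{n ≥ 1} (1 + x q^(2n-1))(1 + x⁻¹ q^(2n-1))(1 - q^(2n))`. -/
theorem jacobi_triple_product (q x : ℂ) (hq : ‖q‖ < 1) (hx : x ≠ 0) :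
    ∑' n : ℤ, q ^ (n ^ 2) * x ^ n =
      ∏' n : ℕ, ((1 + x * q ^ (2 * n + 1)) * (1 + x⁻¹ * q ^ (2 * n + 1)) *
        (1 - q ^ (2 * n + 2))) := by
  by_cases hq0 : q = 0
  · subst hq0
    have hL : ∑' n : ℤ, (0:ℂ) ^ (n ^ 2) * x ^ n = 1 := by
      rw [tsum_eq_single 0 (fun n hn => by
        rw [zero_zpow _ (pow_ne_zero 2 hn), zero_mul])]
      norm_num
    have hR : ∀ n : ℕ, ((1 + x * (0:ℂ) ^ (2 * n + 1)) * (1 + x⁻¹ * (0:ℂ) ^ (2 * n + 1)) *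
        (1 - (0:ℂ) ^ (2 * n + 2))) = 1 := by
      intro n
      rw [zero_pow (by omega : 2*n+1 ≠ 0), zero_pow (by omega : 2*n+2 ≠ 0)]
      ring
    rw [hL, funext hR, tprod_one]
  -- main case
  set f : ℕ → ℂ := fun n => (1 + x * q^(2*n+1)) * (1 + x⁻¹ * q^(2*n+1)) * (1 - q^(2*n+2))
    with hf
  set S : ℂ := ∑' n : ℤ, q ^ (n ^ 2) * x ^ n with hS
  have hq2 : ‖q^2‖ < 1 := by
    rw [norm_pow]; exact pow_lt_one₀ (norm_nonneg q) hq (by omega)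
  have hq4 : ‖q^4‖ < 1 := by
    rw [norm_pow]; exact pow_lt_one₀ (norm_nonneg q) hq (by omega)
  have hq6 : ‖q^6‖ < 1 := by
    rw [norm_pow]; exact pow_lt_one₀ (norm_nonneg q) hq (by omega)
  suffices hmain : Tendsto (fun N => ∏ j ∈ range N, f j) atTop (𝓝 S) by
    by_cases hzero : ∃ m, f m = 0
    · obtain ⟨m, hm⟩ := hzero
      have hps : HasProd f 0 := by
        have hev : ∀ᶠ s : Finset ℕ in atTop, ∏ i ∈ s, f i = 0 := by
          filter_upwards [eventually_ge_atTop {m}] with s hs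
          exact Finset.prod_eq_zero (hs (Finset.mem_singleton_self m)) hm
        exact Tendsto.congr' (hev.mono fun s h => h.symm) tendsto_const_nhds
      rw [hps.tprod_eq]
      exact tendsto_nhds_unique hmain hps.tendsto_prod_nat
    · push_neg at hzero
      have hxx : x * x⁻¹ = 1 := mul_inv_cancel₀ hx
      set u : ℕ → ℂ := fun n => (x*q + x⁻¹*q - q^2)*(q^2)^n
        + (q^2 - x*q^3 - x⁻¹*q^3)*(q^4)^n - q^4*(q^6)^n with hu
      have husum : Summable u :=
        (((summable_geometric_of_norm_lt_one hq2).mul_left _).add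
          ((summable_geometric_of_norm_lt_one hq4).mul_left _)).sub
          ((summable_geometric_of_norm_lt_one hq6).mul_left _)
      have hfu : ∀ n, f n = 1 + u n := by
        intro n
        simp only [hf, hu]
        linear_combination (q^(4*n+2) - q^(6*n+4)) * hxx
      have h0 : ∀ n, 1 + u n ≠ 0 := fun n => (hfu n) ▸ hzero n
      have hp := hasProd_one_add husum h0
      have heq : (fun n => 1 + u n) = f := funext fun n => (hfu n).symm
      rw [heq] at hp
      rw [hp.tprod_eq]
      exact tendsto_nhds_unique hmain hp.tendsto_prod_nat
  -- Proof of hmain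
  -- infinite product of (1 - q^(2j+2))
  have hvsum : Summable (fun j : ℕ => -(q^(2*j+2))) := by
    refine Summable.congr (((summable_geometric_of_norm_lt_one hq2).mul_left
      (-(q^2)))) fun j => ?_
    rw [← pow_mul]
    ring
  have hone : ∀ j : ℕ, (1:ℂ) + -(q^(2*j+2)) ≠ 0 := by
    intro j
    rw [← sub_eq_add_neg]
    exact one_sub_pow_ne hq (by omega)
  have hsubeq : (fun j : ℕ => 1 + -(q^(2*j+2))) = (fun j : ℕ => 1 - q^(2*j+2)) := by
    funext j; rw [← sub_eq_add_neg]
  have hPinfprod : HasProd (fun j : ℕ => 1 - q^(2*j+2)) (∏' j : ℕ, (1 - q^(2*j+2))) := by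
    have := hasProd_one_add hvsum hone
    rwa [hsubeq] at this
  set Pinf : ℂ := ∏' j : ℕ, (1 - q^(2*j+2)) with hPinf
  have hP0 : Pinf ≠ 0 := by
    have := tprod_one_add_ne_zero hvsum hone
    rwa [hsubeq] at this
  have hPt : Tendsto (fun m => P q m) atTop (𝓝 Pinf) := hPinfprod.tendsto_prod_nat
  -- real bounds
  set a : ℕ → ℝ := fun j => ‖q‖^(2*j+2) with ha
  have ha0 : ∀ j, 0 ≤ a j := fun j => pow_nonneg (norm_nonneg q) _
  have ha1 : ∀ j, a j < 1 := fun j => pow_lt_one₀ (norm_nonneg q) hq (by omega)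
  have hnq2 : ‖q‖^2 < 1 := by rw [← norm_pow]; exact hq2
  have hasum : Summable a := by
    refine Summable.congr ((summable_geometric_of_lt_one (by positivity)
      hnq2).mul_left (‖q‖^2)) fun j => ?_
    show ‖q‖^2 * (‖q‖^2)^j = ‖q‖^(2*j+2)
    rw [← pow_mul, ← pow_add]
    ring_nf
  obtain ⟨J, hJ⟩ : ∃ J : ℕ, ∑' k : ℕ, a (k + J) ≤ 1/2 := by
    have htail : Tendsto (fun i => ∑' k : ℕ, a (k + i)) atTop (𝓝 0) :=
      tendsto_sum_nat_add a
    exact (htail.eventually_le_const (by norm_num : (0:ℝ) < 1/2)).exists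
  set pB : ℝ := (∏ j ∈ range J, (1 - a j)) / 2 with hpB
  have hprodJpos : 0 < ∏ j ∈ range J, (1 - a j) :=
    Finset.prod_pos fun j _ => by linarith [ha1 j]
  have hpBpos : 0 < pB := by positivity
  have hlow : ∀ m, pB ≤ ∏ j ∈ range m, (1 - a j) := by
    intro m
    have hprodpos : ∀ k, (0:ℝ) < ∏ j ∈ range k, (1 - a j) :=
      fun k => Finset.prod_pos fun j _ => by linarith [ha1 j]
    rcases le_or_gt m J with hmJ | hmJ
    · have hsplit := Finset.prod_range_mul_prod_Ico (fun j => 1 - a j) hmJ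
      have hIco : ∏ j ∈ Finset.Ico m J, (1 - a j) ≤ 1 :=
        Finset.prod_le_one (fun j _ => by linarith [ha1 j]) (fun j _ => by linarith [ha0 j])
      have : ∏ j ∈ range J, (1 - a j) ≤ ∏ j ∈ range m, (1 - a j) := by
        rw [← hsplit]
        nlinarith [hprodpos m]
      rw [hpB]
      linarith [hprodpos m]
    · have hsplit := Finset.prod_range_mul_prod_Ico (fun j => 1 - a j) hmJ.le
      have hsumIco : ∑ j ∈ Finset.Ico J m, a j ≤ 1/2 := by
        rw [Finset.sum_Ico_eq_sum_range]
        refine le_trans ?_ hJ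
        have hsummable : Summable (fun k : ℕ => a (k + J)) :=
          (summable_nat_add_iff J).2 hasum
        refine le_trans (le_of_eq ?_) (Summable.sum_le_tsum (range (m - J))
          (fun k _ => ha0 _) hsummable)
        exact Finset.sum_congr rfl fun k _ => by rw [Nat.add_comm]
      have hIco : (1:ℝ)/2 ≤ ∏ j ∈ Finset.Ico J m, (1 - a j) := by
        have := weier (Finset.Ico J m) a ha0 (fun j => (ha1 j).le)
        linarith
      rw [← hsplit, hpB]
      have h1 := hprodJpos
      nlinarith
  have hPlow : ∀ m, pB ≤ ‖P q m‖ := by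
    intro m
    refine le_trans (hlow m) ?_
    rw [P, norm_prod]
    refine Finset.prod_le_prod (fun j _ => by linarith [ha1 j]) fun j _ => ?_
    have := norm_sub_norm_le (1:ℂ) (q^(2*j+2))
    rw [norm_one, norm_pow] at this
    exact this
  set A : ℝ := ∑' j, a j with hA
  have hPhigh : ∀ m, ‖P q m‖ ≤ Real.exp A := by
    intro m
    rw [P, norm_prod]
    calc ∏ j ∈ range m, ‖1 - q^(2*j+2)‖ ≤ ∏ j ∈ range m, (1 + a j) := by
          refine Finset.prod_le_prod (fun j _ => norm_nonneg _) fun j _ => ?_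
          refine le_trans (norm_sub_le _ _) ?_
          rw [norm_one, norm_pow]
      _ ≤ ∏ j ∈ range m, Real.exp (a j) := by
          refine Finset.prod_le_prod (fun j _ => by linarith [ha0 j]) fun j _ => ?_
          linarith [Real.add_one_le_exp (a j)]
      _ = Real.exp (∑ j ∈ range m, a j) := (Real.exp_sum _ _).symm
      _ ≤ Real.exp A := by
          rw [Real.exp_le_exp]
          exact Summable.sum_le_tsum _ (fun j _ => ha0 j) hasum
  set C : ℝ := Real.exp A / (pB * pB) with hC
  have hgbd : ∀ m k, ‖g q m k‖ ≤ C := by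
    intro m k
    rw [g, norm_div, norm_mul, hC]
    exact div_le_div₀ (Real.exp_nonneg A) (hPhigh m) (mul_pos hpBpos hpBpos)
      (mul_le_mul (hPlow k) (hPlow (m - k)) hpBpos.le (norm_nonneg _))
  -- Tannery's theorem
  set sf : ℤ → ℂ := fun n => q^(n^2) * x^n with hsf
  set F : ℕ → ℤ → ℂ := fun N n =>
    if n.natAbs ≤ N then g q (2*N) ((n + N).toNat) * sf n else 0 with hF
  have h_bound : ∀ N n, ‖F N n‖ ≤ C * ‖sf n‖ := by
    intro N n
    rw [hF]
    simp only
    split_ifs with h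
    · rw [norm_mul]
      exact mul_le_mul_of_nonneg_right (hgbd _ _) (norm_nonneg _)
    · rw [norm_zero]
      have hC0 : 0 ≤ C := le_of_lt (by positivity)
      positivity
  have h_ab : ∀ n : ℤ, Tendsto (fun N => F N n) atTop (𝓝 (Pinf⁻¹ * sf n)) := by
    intro n
    have hcomp : ∀ (σ : ℕ → ℕ), Tendsto σ atTop atTop →
        Tendsto (fun N => P q (σ N)) atTop (𝓝 Pinf) := fun σ hσ => hPt.comp hσ
    have t1 : Tendsto (fun N => P q (2*N)) atTop (𝓝 Pinf) :=
      hcomp _ (tendsto_atTop_atTop_of_monotone (fun c d h => by omega) (fun b => ⟨b, by omega⟩))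
    have t2 : Tendsto (fun N : ℕ => P q ((n + (N:ℤ)).toNat)) atTop (𝓝 Pinf) :=
      hcomp (fun N : ℕ => (n + (N:ℤ)).toNat)
        (tendsto_atTop.2 fun b => eventually_atTop.2 ⟨b + n.natAbs, fun N hN => by omega⟩)
    have t3 : Tendsto (fun N : ℕ => P q (2*N - (n + (N:ℤ)).toNat)) atTop (𝓝 Pinf) :=
      hcomp (fun N : ℕ => 2*N - (n + (N:ℤ)).toNat)
        (tendsto_atTop.2 fun b => eventually_atTop.2 ⟨b + n.natAbs, fun N hN => by omega⟩)
    have hdiv : Tendsto (fun N : ℕ => g q (2*N) ((n + (N:ℤ)).toNat)) atTop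
        (𝓝 (Pinf / (Pinf * Pinf))) := Tendsto.div t1 (t2.mul t3) (mul_ne_zero hP0 hP0)
    have hval : Pinf / (Pinf * Pinf) * sf n = Pinf⁻¹ * sf n := by
      field_simp
    have := hdiv.mul_const (sf n)
    rw [hval] at this
    refine Tendsto.congr' ?_ this
    filter_upwards [eventually_ge_atTop n.natAbs] with N hN
    rw [hF]
    simp only [if_pos hN]
  have htan : Tendsto (fun N => ∑' n, F N n) atTop (𝓝 (∑' n : ℤ, Pinf⁻¹ * sf n)) :=
    tendsto_tsum_of_dominated_convergence
      ((summable_norm_theta hq hq0 hx).mul_left C) h_ab (Eventually.of_forall h_bound)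
  have hFsum : ∀ N, (∑' n, F N n)
      = ∏ j ∈ range N, ((1 + x * q^(2*j+1)) * (1 + x⁻¹ * q^(2*j+1))) := by
    intro N
    have hout : ∀ n ∉ Finset.Icc (-(N:ℤ)) N, F N n = 0 := by
      intro n hn
      rw [Finset.mem_Icc] at hn
      rw [hF]
      simp only
      rw [if_neg (by omega)]
    rw [tsum_eq_sum hout, finiteJTP hq hq0 hx N]
    refine Finset.sum_nbij' (i := fun n : ℤ => (n + N).toNat)
      (j := fun k : ℕ => (k : ℤ) - N) ?_ ?_ ?_ ?_ ?_
    · intro n hn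
      rw [Finset.mem_Icc] at hn
      rw [Finset.mem_range]
      show (n + (N:ℤ)).toNat < 2*N+1
      omega
    · intro k hk
      rw [Finset.mem_range] at hk
      rw [Finset.mem_Icc]
      show -(N:ℤ) ≤ (k:ℤ) - N ∧ (k:ℤ) - N ≤ N
      omega
    · intro n hn
      rw [Finset.mem_Icc] at hn
      show ((n + (N:ℤ)).toNat : ℤ) - N = n
      omega
    · intro k hk
      rw [Finset.mem_range] at hk
      show (((k:ℤ) - N + N).toNat) = k
      omega
    · intro n hn
      rw [Finset.mem_Icc] at hn
      rw [hF]
      simp only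
      rw [if_pos (by omega)]
      have hcast : (((n + N).toNat : ℤ)) - N = n := by omega
      rw [hcast, hsf, mul_assoc]
  have hpair : Tendsto (fun N => ∏ j ∈ range N,
      ((1 + x * q^(2*j+1)) * (1 + x⁻¹ * q^(2*j+1)))) atTop (𝓝 (Pinf⁻¹ * S)) := by
    have : (∑' n : ℤ, Pinf⁻¹ * sf n) = Pinf⁻¹ * S := by
      rw [tsum_mul_left]
    rw [← this]
    exact Tendsto.congr (fun N => hFsum N) htan
  have hsplit2 : ∀ N, ∏ j ∈ range N, f j
      = (∏ j ∈ range N, ((1 + x * q^(2*j+1)) * (1 + x⁻¹ * q^(2*j+1)))) * P q N := by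
    intro N
    rw [P, ← Finset.prod_mul_distrib]
  have hfinal := hpair.mul hPt
  have hval2 : Pinf⁻¹ * S * Pinf = S := by
    rw [mul_comm, ← mul_assoc, mul_inv_cancel₀ hP0, one_mul]
  rw [hval2] at hfinal
  exact Tendsto.congr (fun N => (hsplit2 N).symm) hfinal
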